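/- Let k ≥ 1 and λ, μ, κ > 0 with kλ > μ. Define V(y) = Σ_{i=1}^k ∫ over a path from y* to y of h(y')·dy', where h_i(y) = ln( y_i(μ + κ Σ_j y_j) / (λ Σ_j y_j) ) and y* = ((kλ−μ)/(kκ),…,(kλ−μ)/(kκ)). Then the limit of V along any path approaching the origin within the positive orthant equals (kλ − μ)/κ + (μ/κ) ln( μ/(kλ) ), and this value is strictly positive. -/

import Mathlib

open Filter

theorem action_limit_at_origin_example2 (k : ℕ) (hk : 1 ≤ k)
    (lam mu kap : ℝ) (hlam : 0 < lam) (hmu : 0 < mu) (hkap : 0 < kap)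
    (hthresh : mu < k * lam)
    (h : Fin k → (Fin k → ℝ) → ℝ)
    (hdef : ∀ i y, h i y = Real.log (y i * (mu + kap * ∑ j, y j) / (lam * ∑ j, y j)))
    (ystar : Fin k → ℝ) (hystar : ∀ i, ystar i = (k * lam - mu) / (k * kap))
    (U : Set (Fin k → ℝ)) (hU : U = {y | ∀ i, 0 < y i})
    (A : ℝ) (hA : A = (k * lam - mu) / kap + (mu / kap) * Real.log (mu / (k * lam)))
    (V : (Fin k → ℝ) → ℝ)
    (hgrad : ∀ y ∈ U, DifferentiableAt ℝ V y ∧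
      ∀ v : Fin k → ℝ, fderiv ℝ V y v = ∑ i, h i y * v i)
    (hV0 : V ystar = 0) :
    Tendsto V (nhdsWithin 0 U) (nhds A) ∧ 0 < A := by
  haveI : Nonempty (Fin k) := ⟨⟨0, hk⟩⟩
  have hk0 : (0:ℝ) < k := by
    have : (1:ℝ) ≤ k := by exact_mod_cast hk
    linarith
  -- the explicit potential
  set Φ : (Fin k → ℝ) → ℝ := fun y =>
    (∑ i, y i * Real.log (y i)) + (mu + kap * ∑ j, y j) * Real.log (mu + kap * ∑ j, y j) / kap
      - (mu + kap * ∑ j, y j) / kap - (∑ j, y j) * Real.log (∑ j, y j)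
      - (∑ j, y j) * Real.log lam with hΦdef
  set L0 : (Fin k → ℝ) →L[ℝ] ℝ := ∑ j, ContinuousLinearMap.proj j with hL0def
  set D : (Fin k → ℝ) → ((Fin k → ℝ) →L[ℝ] ℝ) := fun y =>
    (∑ i, (Real.log (y i) + 1) • (ContinuousLinearMap.proj i : (Fin k → ℝ) →L[ℝ] ℝ))
      + ((Real.log (mu + kap * ∑ j, y j) + 1) * kap / kap) • L0
      - (kap / kap) • L0
      - (Real.log (∑ j, y j) + 1) • L0
      - Real.log lam • L0 with hDdef
  have hUmem : ∀ y ∈ U, ∀ i, 0 < y i := by intro y hy; rwa [hU] at hy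
  have hSpos : ∀ y ∈ U, 0 < ∑ j, y j := fun y hy =>
    Finset.sum_pos (fun j _ => hUmem y hy j) Finset.univ_nonempty
  -- derivative of Φ
  have hΦfd : ∀ y ∈ U, HasFDerivAt Φ (D y) y := by
    intro y hy
    have hyi := hUmem y hy
    have hSy := hSpos y hy
    have hs0 : 0 < mu + kap * ∑ j, y j := by positivity
    have hSfd : HasFDerivAt (fun y : Fin k → ℝ => ∑ j, y j) L0 y := by
      apply HasFDerivAt.fun_sum
      intro j _
      exact hasFDerivAt_apply j y
    have h1 : HasFDerivAt (fun y : Fin k → ℝ => ∑ i, y i * Real.log (y i))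
        (∑ i, (Real.log (y i) + 1) • (ContinuousLinearMap.proj i : (Fin k → ℝ) →L[ℝ] ℝ)) y := by
      apply HasFDerivAt.fun_sum
      intro i _
      exact (Real.hasDerivAt_mul_log (hyi i).ne').comp_hasFDerivAt (f := fun f : Fin k → ℝ => f i) y (hasFDerivAt_apply i y)
    have hu : HasDerivAt (fun t : ℝ => mu + kap * t) kap (∑ j, y j) := by
      simpa using ((hasDerivAt_id (∑ j, y j)).const_mul kap).const_add mu
    have h2 : HasFDerivAt (fun y : Fin k → ℝ =>
        (mu + kap * ∑ j, y j) * Real.log (mu + kap * ∑ j, y j) / kap)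
        (((Real.log (mu + kap * ∑ j, y j) + 1) * kap / kap) • L0) y := by
      have hcomp := ((Real.hasDerivAt_mul_log hs0.ne').comp (∑ j, y j) hu).div_const kap
      have hd : HasDerivAt (fun t : ℝ => (mu + kap * t) * Real.log (mu + kap * t) / kap)
          ((Real.log (mu + kap * ∑ j, y j) + 1) * kap / kap) (∑ j, y j) := by
        simpa [Function.comp] using hcomp
      exact hd.comp_hasFDerivAt y hSfd
    have h3 : HasFDerivAt (fun y : Fin k → ℝ => (mu + kap * ∑ j, y j) / kap)
        ((kap / kap) • L0) y := by
      have hd : HasDerivAt (fun t : ℝ => (mu + kap * t) / kap) (kap / kap) (∑ j, y j) :=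
        hu.div_const kap
      exact hd.comp_hasFDerivAt y hSfd
    have h4 : HasFDerivAt (fun y : Fin k → ℝ => (∑ j, y j) * Real.log (∑ j, y j))
        ((Real.log (∑ j, y j) + 1) • L0) y :=
      (Real.hasDerivAt_mul_log hSy.ne').comp_hasFDerivAt y hSfd
    have h5 : HasFDerivAt (fun y : Fin k → ℝ => (∑ j, y j) * Real.log lam)
        (Real.log lam • L0) y := by
      have hd : HasDerivAt (fun t : ℝ => t * Real.log lam) (Real.log lam) (∑ j, y j) := by
        simpa using (hasDerivAt_id (∑ j, y j)).mul_const (Real.log lam)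
      exact hd.comp_hasFDerivAt y hSfd
    exact ((((h1.add h2).sub h3).sub h4).sub h5)
  -- evaluation of the derivative
  have hDeval : ∀ y ∈ U, ∀ v : Fin k → ℝ, D y v = ∑ i, h i y * v i := by
    intro y hy v
    have hyi := hUmem y hy
    have hSy := hSpos y hy
    have hs0 : 0 < mu + kap * ∑ j, y j := by positivity
    have hL0v : L0 v = ∑ j, v j := by
      simp [hL0def, ContinuousLinearMap.sum_apply]
    have hh : ∀ i, h i y = Real.log (y i) + Real.log (mu + kap * ∑ j, y j)
        - Real.log lam - Real.log (∑ j, y j) := by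
      intro i
      rw [hdef, Real.log_div (mul_pos (hyi i) hs0).ne' (mul_pos hlam hSy).ne',
        Real.log_mul (hyi i).ne' hs0.ne', Real.log_mul hlam.ne' hSy.ne']
      ring
    simp only [hDdef, ContinuousLinearMap.sub_apply, ContinuousLinearMap.add_apply,
      ContinuousLinearMap.smul_apply, ContinuousLinearMap.sum_apply,
      ContinuousLinearMap.proj_apply, smul_eq_mul, hL0v, hh]
    rw [div_self hkap.ne', mul_div_assoc, div_self hkap.ne', mul_one]
    simp only [add_mul, sub_mul, one_mul, Finset.sum_add_distrib, Finset.sum_sub_distrib,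
      ← Finset.mul_sum]
    ring
  -- U is open and convex, ystar ∈ U
  have hUeq : U = Set.pi Set.univ (fun _ : Fin k => Set.Ioi (0:ℝ)) := by
    rw [hU]; ext y; simp [Set.mem_pi]
  have hUopen : IsOpen U := by
    rw [hUeq]; exact isOpen_set_pi Set.finite_univ (fun i _ => isOpen_Ioi)
  have hUconv : Convex ℝ U := by
    rw [hUeq]; exact convex_pi (fun i _ => convex_Ioi 0)
  have ha : 0 < (k * lam - mu) / (k * kap) := div_pos (by linarith) (by positivity)
  have hystarU : ystar ∈ U := by
    rw [hU]; intro i; rw [hystar]; exact ha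
  -- V = Φ - Φ ystar on U
  have hkey : ∀ y ∈ U, V y = Φ y - Φ ystar := by
    intro y hy
    have hconst : (fun z => V z - Φ z) y = (fun z => V z - Φ z) ystar := by
      refine hUconv.is_const_of_fderivWithin_eq_zero (𝕜 := ℝ)
        (f := fun z => V z - Φ z) ?_ ?_ hy hystarU
      · intro z hz
        exact ((hgrad z hz).1.sub (hΦfd z hz).differentiableAt).differentiableWithinAt
      · intro z hz
        rw [fderivWithin_of_isOpen hUopen hz]
        have hdV := (hgrad z hz).1
        have hdΦ := (hΦfd z hz).differentiableAt
        rw [fderiv_fun_sub hdV hdΦ]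
        apply ContinuousLinearMap.ext
        intro v
        rw [ContinuousLinearMap.sub_apply, (hΦfd z hz).fderiv, (hgrad z hz).2 v,
          hDeval z hz v]
        simp
    simp only [hV0, zero_sub] at hconst
    linarith [hconst]
  -- continuity of Φ
  have hcS : Continuous fun y : Fin k → ℝ => ∑ j, y j :=
    continuous_finset_sum _ fun j _ => continuous_apply j
  have hΦcont : Continuous Φ := by
    have hc1 : Continuous fun y : Fin k → ℝ => ∑ i, y i * Real.log (y i) :=
      continuous_finset_sum _ fun i _ => Real.continuous_mul_log.comp (continuous_apply i)
    have hcu : Continuous fun y : Fin k → ℝ => mu + kap * ∑ j, y j :=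
      continuous_const.add (continuous_const.mul hcS)
    exact ((((hc1.add ((Real.continuous_mul_log.comp hcu).div_const kap)).sub
      (hcu.div_const kap)).sub (Real.continuous_mul_log.comp hcS)).sub
      (hcS.mul continuous_const))
  -- value at 0
  have hΦ0 : Φ 0 = mu * Real.log mu / kap - mu / kap := by
    simp [hΦdef]
  -- value at ystar
  set a : ℝ := (k * lam - mu) / (k * kap) with hadef
  have hSstar : (∑ j, ystar j) = k * a := by
    simp [hystar, Finset.sum_const, Finset.card_univ, nsmul_eq_mul, hadef]
  have hka : mu + kap * (k * a) = k * lam := by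
    rw [hadef]; field_simp; ring
  have hΦstar : Φ ystar = k * (a * Real.log a) + (k * lam) * Real.log (k * lam) / kap
      - (k * lam) / kap - (k * a) * Real.log (k * a) - (k * a) * Real.log lam := by
    have hsum : ∑ i, ystar i * Real.log (ystar i) = k * (a * Real.log a) := by
      simp [hystar, Finset.sum_const, Finset.card_univ, nsmul_eq_mul]
    simp only [hΦdef, hSstar, hka, hsum]
  -- the limit value equals A
  have hAval : Φ 0 - Φ ystar = A := by
    rw [hΦ0, hΦstar, hA]
    rw [Real.log_div hmu.ne' (by positivity), Real.log_mul hk0.ne' hlam.ne',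
      Real.log_mul hk0.ne' ha.ne']
    rw [hadef]
    field_simp
    ring
  constructor
  · rw [← hAval]
    have htend : Tendsto (fun y => Φ y - Φ ystar) (nhdsWithin 0 U) (nhds (Φ 0 - Φ ystar)) :=
      ((hΦcont.tendsto 0).sub tendsto_const_nhds).mono_left nhdsWithin_le_nhds
    apply Tendsto.congr' _ htend
    exact eventually_nhdsWithin_of_forall fun y hy => (hkey y hy).symm
  · -- positivity of A
    have ht1 : 1 < k * lam / mu := (one_lt_div hmu).2 hthresh
    have hlog : Real.log (k * lam / mu) < k * lam / mu - 1 :=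
      Real.log_lt_sub_one_of_pos (by positivity) (ne_of_gt ht1)
    have hinv : Real.log (mu / (k * lam)) = - Real.log (k * lam / mu) := by
      rw [← Real.log_inv]; congr 1; rw [inv_div]
    rw [hA, hinv]
    have h2 : (mu / kap) * (k * lam / mu - 1) = (k * lam - mu) / kap := by
      field_simp
    have h3 : (mu / kap) * Real.log (k * lam / mu) < (mu / kap) * (k * lam / mu - 1) :=
      mul_lt_mul_of_pos_left hlog (by positivity)
    rw [mul_neg]
    linarith [h3, h2]
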